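/- There is an absolute constant C > 0 such that for all real M ≥ 1, all real U, T with 0 ≤ U ≤ T ≤ √M, all real Ξ with 0 ≤ Ξ ≤ M, all positive integers m, n, k with m < n, and either choice of sign ±, one has |∫_M^{M+Ξ} x^{1/2}·e(±(2√(m(x+T))/k − 2√(n(x+U))/k)) dx| ≤ C·k·√n·M/(n − m). -/

import Mathlib

open Complex MeasureTheory

set_option maxHeartbeats 2000000

/-- `e(t) = exp(2πit)`. -/
noncomputable def e (t : ℝ) : ℂ := Complex.exp (2 * Real.pi * Complex.I * t)

theorem mean_square_lemma_two :
    ∃ C : ℝ, 0 < C ∧ ∀ M U T Ξ : ℝ, 1 ≤ M → 0 ≤ U → U ≤ T → T ≤ Real.sqrt M →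
      0 ≤ Ξ → Ξ ≤ M → ∀ m n k : ℕ, 0 < m → 0 < n → 0 < k → m < n →
      ∀ s : ℝ, s = 1 ∨ s = -1 →
        ‖∫ x in M..(M + Ξ), ((x ^ ((1:ℝ)/2) : ℝ) : ℂ) *
            e (s * (2 * Real.sqrt (m * (x + T)) / k - 2 * Real.sqrt (n * (x + U)) / k))‖ ≤
          C * k * Real.sqrt n * M / ((n : ℝ) - (m : ℝ)) := by
  refine ⟨10, by norm_num, ?_⟩
  intro M U T Ξ hM hU hUT hTM hΞ hΞM m n k hm hn hk hmn s hs
  have hs2 : s ^ 2 = 1 := by rcases hs with h | h <;> norm_num [h]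
  have hsabs : |s| = 1 := by rcases hs with h | h <;> simp [h]
  have hk0 : (0:ℝ) < k := by exact_mod_cast hk
  have hnm : (1:ℝ) ≤ (n:ℝ) - m := by
    have : (m:ℝ) + 1 ≤ n := by exact_mod_cast hmn
    linarith
  have hπ : (0:ℝ) < Real.pi := Real.pi_pos
  set a : ℝ := M with ha
  set b : ℝ := M + Ξ with hb
  have hab : a ≤ b := by simp only [ha, hb]; linarith
  have hmem : ∀ x ∈ Set.Icc a b, 1 ≤ x ∧ 0 < x + U ∧ 0 < x + T := by
    intro x hx
    refine ⟨le_trans hM hx.1, by simp only [ha] at hx; linarith [hx.1], ?_⟩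
    simp only [ha] at hx; linarith [hx.1]
  -- the functions
  set ψ : ℝ → ℝ := fun x => Real.sqrt n * (Real.sqrt (x + U))⁻¹
      - Real.sqrt m * (Real.sqrt (x + T))⁻¹ with hψdef
  set dψ : ℝ → ℝ := fun x => Real.sqrt m * (1 / (2 * Real.sqrt (x + T)) / (Real.sqrt (x + T)) ^ 2)
      - Real.sqrt n * (1 / (2 * Real.sqrt (x + U)) / (Real.sqrt (x + U)) ^ 2) with hdψdef
  set G : ℝ → ℝ := fun x => Real.sqrt x * (ψ x)⁻¹ with hGdef
  set dG : ℝ → ℝ := fun x => 1 / (2 * Real.sqrt x) * (ψ x)⁻¹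
      + Real.sqrt x * (-(dψ x) / (ψ x) ^ 2) with hdGdef
  set φ : ℝ → ℝ := fun x => 2 * s / k * (Real.sqrt m * Real.sqrt (x + T)
      - Real.sqrt n * Real.sqrt (x + U)) with hφdef
  set dφ : ℝ → ℝ := fun x => 2 * s / k * (Real.sqrt m * (1 / (2 * Real.sqrt (x + T)))
      - Real.sqrt n * (1 / (2 * Real.sqrt (x + U)))) with hdφdef
  set E : ℝ → ℂ := fun x => Complex.exp (2 * Real.pi * Complex.I * (φ x)) with hEdef
  set c : ℂ := Complex.I * s * k / (2 * Real.pi) with hcdef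
  set F : ℝ → ℂ := fun x => c * (G x * E x) with hFdef
  -- sqrt facts
  have hsm : Real.sqrt m < Real.sqrt n := by
    apply Real.sqrt_lt_sqrt (by positivity); exact_mod_cast hmn
  have hsn0 : 0 < Real.sqrt n := Real.sqrt_pos.2 (by exact_mod_cast hn)
  have hsm0 : 0 ≤ Real.sqrt m := Real.sqrt_nonneg _
  -- positivity of ψ
  have hψpos : ∀ x ∈ Set.Icc a b, 0 < ψ x := by
    intro x hx
    obtain ⟨h1, hxU, hxT⟩ := hmem x hx
    have hq : 0 < Real.sqrt (x + U) := Real.sqrt_pos.2 hxU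
    have hr : 0 < Real.sqrt (x + T) := Real.sqrt_pos.2 hxT
    have hqr : Real.sqrt (x + U) ≤ Real.sqrt (x + T) := Real.sqrt_le_sqrt (by linarith)
    have hinv : (Real.sqrt (x + T))⁻¹ ≤ (Real.sqrt (x + U))⁻¹ := by
      apply inv_anti₀ hq hqr
    simp only [hψdef]
    have h2 : Real.sqrt m * (Real.sqrt (x + T))⁻¹ ≤ Real.sqrt m * (Real.sqrt (x + U))⁻¹ :=
      mul_le_mul_of_nonneg_left hinv hsm0
    have h3 : Real.sqrt m * (Real.sqrt (x + U))⁻¹ < Real.sqrt n * (Real.sqrt (x + U))⁻¹ := by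
      apply mul_lt_mul_of_pos_right hsm (by positivity)
    linarith
  -- derivatives
  have hderivψ : ∀ x ∈ Set.Icc a b, HasDerivAt ψ (dψ x) x := by
    intro x hx
    obtain ⟨h1, hxU, hxT⟩ := hmem x hx
    have hq : 0 < Real.sqrt (x + U) := Real.sqrt_pos.2 hxU
    have hr : 0 < Real.sqrt (x + T) := Real.sqrt_pos.2 hxT
    have hqd : HasDerivAt (fun y => Real.sqrt (y + U)) (1 / (2 * Real.sqrt (x + U))) x := by
      simpa [Function.comp_def] using (Real.hasDerivAt_sqrt (ne_of_gt hxU)).comp x ((hasDerivAt_id x).add_const U)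
    have hrd : HasDerivAt (fun y => Real.sqrt (y + T)) (1 / (2 * Real.sqrt (x + T))) x := by
      simpa [Function.comp_def] using (Real.hasDerivAt_sqrt (ne_of_gt hxT)).comp x ((hasDerivAt_id x).add_const T)
    have h2 := ((hqd.inv (ne_of_gt hq)).const_mul (Real.sqrt n))
    have h3 := ((hrd.inv (ne_of_gt hr)).const_mul (Real.sqrt m))
    have := h2.sub h3
    refine this.congr_deriv ?_
    simp only [hdψdef]; ring
  have hderivG : ∀ x ∈ Set.Icc a b, HasDerivAt G (dG x) x := by
    intro x hx
    obtain ⟨h1, hxU, hxT⟩ := hmem x hx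
    have hx0 : (0:ℝ) < x := by linarith
    have hψx := hψpos x hx
    have hsx : HasDerivAt Real.sqrt (1 / (2 * Real.sqrt x)) x := Real.hasDerivAt_sqrt (ne_of_gt hx0)
    have := hsx.mul ((hderivψ x hx).inv (ne_of_gt hψx))
    refine this.congr_deriv ?_
    rfl
  have hderivφ : ∀ x ∈ Set.Icc a b, HasDerivAt φ (dφ x) x := by
    intro x hx
    obtain ⟨h1, hxU, hxT⟩ := hmem x hx
    have hqd : HasDerivAt (fun y => Real.sqrt (y + U)) (1 / (2 * Real.sqrt (x + U))) x := by
      simpa [Function.comp_def] using (Real.hasDerivAt_sqrt (by positivity : x + U ≠ 0)).comp x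
        ((hasDerivAt_id x).add_const U)
    have hrd : HasDerivAt (fun y => Real.sqrt (y + T)) (1 / (2 * Real.sqrt (x + T))) x := by
      simpa [Function.comp_def] using (Real.hasDerivAt_sqrt (by positivity : x + T ≠ 0)).comp x
        ((hasDerivAt_id x).add_const T)
    exact ((hrd.const_mul (Real.sqrt m)).sub (hqd.const_mul (Real.sqrt n))).const_mul (2 * s / k)
  have hdφψ : ∀ x ∈ Set.Icc a b, dφ x = -(s / k) * ψ x := by
    intro x hx
    obtain ⟨h1, hxU, hxT⟩ := hmem x hx
    have hq : Real.sqrt (x + U) ≠ 0 := ne_of_gt (Real.sqrt_pos.2 hxU)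
    have hr : Real.sqrt (x + T) ≠ 0 := ne_of_gt (Real.sqrt_pos.2 hxT)
    simp only [hdφdef, hψdef]
    field_simp
    ring
  have hderivE : ∀ x ∈ Set.Icc a b,
      HasDerivAt E ((2 * Real.pi * Complex.I * dφ x) * E x) x := by
    intro x hx
    have h1 : HasDerivAt (fun y : ℝ => ((φ y : ℝ) : ℂ)) (dφ x) x := (hderivφ x hx).ofReal_comp
    have h2 := (h1.const_mul (2 * (Real.pi:ℂ) * Complex.I)).cexp
    convert h2 using 1
    ring
  have hGψ : ∀ x ∈ Set.Icc a b, G x * ψ x = Real.sqrt x := by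
    intro x hx
    simp only [hGdef]
    rw [mul_assoc, inv_mul_cancel₀ (ne_of_gt (hψpos x hx)), mul_one]
  have hderivF : ∀ x ∈ Set.Icc a b,
      HasDerivAt F (c * dG x * E x + (Real.sqrt x : ℂ) * E x) x := by
    intro x hx
    have h1 : HasDerivAt (fun y : ℝ => ((G y : ℝ) : ℂ)) (dG x) x := (hderivG x hx).ofReal_comp
    have h2 := (h1.mul (hderivE x hx)).const_mul c
    refine h2.congr_deriv ?_
    have key : c * ((G x : ℂ) * (2 * Real.pi * Complex.I * dφ x * E x))
        = (Real.sqrt x : ℂ) * E x := by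
      rw [hdφψ x hx]
      have hGψx := hGψ x hx
      have hπ' : (Real.pi : ℂ) ≠ 0 := by exact_mod_cast ne_of_gt hπ
      have hk' : (k : ℂ) ≠ 0 := by exact_mod_cast ne_of_gt hk0
      simp only [hcdef]
      push_cast
      rw [← hGψx]
      push_cast
      field_simp
      ring_nf
      rw [Complex.I_sq]
      have hs2' : ((s:ℂ))^2 = 1 := by exact_mod_cast hs2
      rw [hs2']
      ring
    rw [mul_add] at *
    rw [← key]
    ring
  -- continuity facts
  have hcq : Continuous (fun x : ℝ => Real.sqrt (x + U)) :=
    Real.continuous_sqrt.comp (continuous_id.add continuous_const)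
  have hcr : Continuous (fun x : ℝ => Real.sqrt (x + T)) :=
    Real.continuous_sqrt.comp (continuous_id.add continuous_const)
  have hqne : ∀ x ∈ Set.Icc a b, Real.sqrt (x + U) ≠ 0 := fun x hx =>
    ne_of_gt (Real.sqrt_pos.2 (hmem x hx).2.1)
  have hrne : ∀ x ∈ Set.Icc a b, Real.sqrt (x + T) ≠ 0 := fun x hx =>
    ne_of_gt (Real.sqrt_pos.2 (hmem x hx).2.2)
  have hcψ : ContinuousOn ψ (Set.Icc a b) := by
    apply ContinuousOn.sub
    · exact continuousOn_const.mul (hcq.continuousOn.inv₀ hqne)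
    · exact continuousOn_const.mul (hcr.continuousOn.inv₀ hrne)
  have hcdψ : ContinuousOn dψ (Set.Icc a b) := by
    apply ContinuousOn.sub
    · exact continuousOn_const.mul
        ((continuousOn_const.div (continuousOn_const.mul hcr.continuousOn)
          (fun x hx => by simpa using hrne x hx)).div (hcr.continuousOn.pow 2)
          (fun x hx => pow_ne_zero 2 (hrne x hx)))
    · exact continuousOn_const.mul
        ((continuousOn_const.div (continuousOn_const.mul hcq.continuousOn)
          (fun x hx => by simpa using hqne x hx)).div (hcq.continuousOn.pow 2)
          (fun x hx => pow_ne_zero 2 (hqne x hx)))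
  have hψne : ∀ x ∈ Set.Icc a b, ψ x ≠ 0 := fun x hx => ne_of_gt (hψpos x hx)
  have hcG : ContinuousOn G (Set.Icc a b) :=
    Real.continuous_sqrt.continuousOn.mul (hcψ.inv₀ hψne)
  have hcdG : ContinuousOn dG (Set.Icc a b) := by
    apply ContinuousOn.add
    · exact (continuousOn_const.div (continuousOn_const.mul
        Real.continuous_sqrt.continuousOn) (fun x hx => by
          have := (hmem x hx).1
          have : (0:ℝ) < Real.sqrt x := Real.sqrt_pos.2 (by linarith)
          exact (mul_pos two_pos this).ne')).mul (hcψ.inv₀ hψne)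
    · exact Real.continuous_sqrt.continuousOn.mul
        ((hcdψ.neg.div (hcψ.pow 2) (fun x hx => pow_ne_zero 2 (hψne x hx))))
  have hcφ : ContinuousOn φ (Set.Icc a b) :=
    continuousOn_const.mul ((continuousOn_const.mul hcr.continuousOn).sub
      (continuousOn_const.mul hcq.continuousOn))
  have hcE : ContinuousOn E (Set.Icc a b) :=
    Complex.continuous_exp.comp_continuousOn
      (continuousOn_const.mul (Complex.continuous_ofReal.comp_continuousOn hcφ))
  -- integrability
  have hint1 : IntervalIntegrable (fun x => c * (dG x : ℂ) * E x) volume a b := by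
    apply ContinuousOn.intervalIntegrable
    rw [Set.uIcc_of_le hab]
    exact (continuousOn_const.mul (Complex.continuous_ofReal.comp_continuousOn hcdG)).mul hcE
  have hint2 : IntervalIntegrable (fun x => ((Real.sqrt x : ℝ) : ℂ) * E x) volume a b := by
    apply ContinuousOn.intervalIntegrable
    rw [Set.uIcc_of_le hab]
    exact ((Complex.continuous_ofReal.comp Real.continuous_sqrt).continuousOn).mul hcE
  have hintG : IntervalIntegrable dG volume a b := by
    apply ContinuousOn.intervalIntegrable
    rw [Set.uIcc_of_le hab]; exact hcdG
  -- FTC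
  have hFTC : (∫ x in a..b, (c * (dG x : ℂ) * E x + ((Real.sqrt x : ℝ) : ℂ) * E x))
      = F b - F a := by
    apply intervalIntegral.integral_eq_sub_of_hasDerivAt
    · intro x hx
      rw [Set.uIcc_of_le hab] at hx
      exact hderivF x hx
    · exact hint1.add hint2
  have hsplit : (∫ x in a..b, ((Real.sqrt x : ℝ) : ℂ) * E x)
      = F b - F a - ∫ x in a..b, c * (dG x : ℂ) * E x := by
    rw [intervalIntegral.integral_add hint1 hint2] at hFTC
    linear_combination hFTC
  have hFTCG : (∫ x in a..b, dG x) = G b - G a := by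
    apply intervalIntegral.integral_eq_sub_of_hasDerivAt
    · intro x hx
      rw [Set.uIcc_of_le hab] at hx
      exact hderivG x hx
    · exact hintG
  -- norms
  have hEnorm : ∀ x : ℝ, ‖E x‖ = 1 := by
    intro x
    have : (2 * (Real.pi:ℂ) * Complex.I * (φ x : ℂ)) = ((2 * Real.pi * φ x : ℝ) : ℂ) * Complex.I := by
      push_cast; ring
    simp only [hEdef, this, Complex.norm_exp_ofReal_mul_I]
  have hcnorm : ‖c‖ = k / (2 * Real.pi) := by
    simp only [hcdef, norm_div, norm_mul, Complex.norm_I, Complex.norm_real, Real.norm_eq_abs,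
      Complex.norm_natCast, Complex.norm_two, one_mul, hsabs]
    rw [abs_of_pos hπ]
  have hGnonneg : ∀ x ∈ Set.Icc a b, 0 ≤ G x := by
    intro x hx
    have := hψpos x hx
    simp only [hGdef]
    positivity
  have hFnorm : ∀ x ∈ Set.Icc a b, ‖F x‖ = k / (2 * Real.pi) * G x := by
    intro x hx
    simp only [hFdef, norm_mul, hcnorm, hEnorm, Complex.norm_real, Real.norm_eq_abs, mul_one,
      _root_.abs_of_nonneg (hGnonneg x hx)]
  -- dG ≥ 0
  have hdψnonpos : ∀ x ∈ Set.Icc a b, dψ x ≤ 0 := by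
    intro x hx
    obtain ⟨h1, hxU, hxT⟩ := hmem x hx
    have hq : 0 < Real.sqrt (x + U) := Real.sqrt_pos.2 hxU
    have hr : 0 < Real.sqrt (x + T) := Real.sqrt_pos.2 hxT
    have hqr : Real.sqrt (x + U) ≤ Real.sqrt (x + T) := Real.sqrt_le_sqrt (by linarith)
    have e1 : 1 / (2 * Real.sqrt (x + T)) / (Real.sqrt (x + T)) ^ 2
        = 1 / (2 * Real.sqrt (x + T) * (Real.sqrt (x + T)) ^ 2) := by ring
    have e2 : 1 / (2 * Real.sqrt (x + U)) / (Real.sqrt (x + U)) ^ 2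
        = 1 / (2 * Real.sqrt (x + U) * (Real.sqrt (x + U)) ^ 2) := by ring
    have h3 : 1 / (2 * Real.sqrt (x + T) * (Real.sqrt (x + T)) ^ 2)
        ≤ 1 / (2 * Real.sqrt (x + U) * (Real.sqrt (x + U)) ^ 2) := by
      apply one_div_le_one_div_of_le (by positivity)
      have hsq : Real.sqrt (x + U) ^ 2 ≤ Real.sqrt (x + T) ^ 2 := by
        apply pow_le_pow_left₀ hq.le hqr
      nlinarith [hsq, hq, hr, hqr]
    simp only [hdψdef]
    rw [e1, e2]
    have h4 : Real.sqrt m * (1 / (2 * Real.sqrt (x + T) * (Real.sqrt (x + T)) ^ 2))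
        ≤ Real.sqrt n * (1 / (2 * Real.sqrt (x + U) * (Real.sqrt (x + U)) ^ 2)) := by
      apply mul_le_mul (le_of_lt hsm) h3 (by positivity) (le_of_lt hsn0)
    linarith
  have hdGnonneg : ∀ x ∈ Set.Icc a b, 0 ≤ dG x := by
    intro x hx
    obtain ⟨h1, hxU, hxT⟩ := hmem x hx
    have hx0 : (0:ℝ) < x := by linarith
    have hψx := hψpos x hx
    have hdψx := hdψnonpos x hx
    have hsx : 0 < Real.sqrt x := Real.sqrt_pos.2 hx0
    simp only [hdGdef]
    have t1 : 0 ≤ 1 / (2 * Real.sqrt x) * (ψ x)⁻¹ := by positivity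
    have t2 : 0 ≤ Real.sqrt x * (-(dψ x) / (ψ x) ^ 2) := by
      apply mul_nonneg (le_of_lt hsx)
      apply div_nonneg (by linarith) (by positivity)
    linarith
  -- bound on the correction integral
  have hbound2 : ‖∫ x in a..b, c * (dG x : ℂ) * E x‖
      ≤ k / (2 * Real.pi) * (G b - G a) := by
    calc ‖∫ x in a..b, c * (dG x : ℂ) * E x‖
        ≤ ∫ x in a..b, ‖c * (dG x : ℂ) * E x‖ :=
          intervalIntegral.norm_integral_le_integral_norm hab
      _ = ∫ x in a..b, k / (2 * Real.pi) * dG x := by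
          apply intervalIntegral.integral_congr
          intro x hx
          rw [Set.uIcc_of_le hab] at hx
          simp only [norm_mul, hcnorm, hEnorm, Complex.norm_real, Real.norm_eq_abs, mul_one,
            _root_.abs_of_nonneg (hdGnonneg x hx)]
      _ = k / (2 * Real.pi) * ∫ x in a..b, dG x := by
          rw [intervalIntegral.integral_const_mul]
      _ = k / (2 * Real.pi) * (G b - G a) := by rw [hFTCG]
  have hamem : a ∈ Set.Icc a b := ⟨le_refl a, hab⟩
  have hbmem : b ∈ Set.Icc a b := ⟨hab, le_refl b⟩
  -- main abstract bound
  have hmain : ‖∫ x in a..b, ((Real.sqrt x : ℝ) : ℂ) * E x‖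
      ≤ k / Real.pi * G b := by
    rw [hsplit]
    have h1 : ‖F b - F a - ∫ x in a..b, c * (dG x : ℂ) * E x‖
        ≤ ‖F b‖ + ‖F a‖
          + ‖∫ x in a..b, c * (dG x : ℂ) * E x‖ := by
      calc ‖F b - F a - ∫ x in a..b, c * (dG x : ℂ) * E x‖
          ≤ ‖F b - F a‖ + ‖∫ x in a..b, c * (dG x : ℂ) * E x‖ := norm_sub_le _ _
        _ ≤ ‖F b‖ + ‖F a‖ + ‖∫ x in a..b, c * (dG x : ℂ) * E x‖ := by
            linarith [norm_sub_le (F b) (F a)]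
    calc ‖F b - F a - ∫ x in a..b, c * (dG x : ℂ) * E x‖
        ≤ ‖F b‖ + ‖F a‖
          + ‖∫ x in a..b, c * (dG x : ℂ) * E x‖ := h1
      _ = k / (2 * Real.pi) * G b + k / (2 * Real.pi) * G a
          + ‖∫ x in a..b, c * (dG x : ℂ) * E x‖ := by
          rw [hFnorm a hamem, hFnorm b hbmem]
      _ ≤ k / (2 * Real.pi) * G b + k / (2 * Real.pi) * G a
          + k / (2 * Real.pi) * (G b - G a) := by linarith [hbound2]
      _ = k / Real.pi * G b := by field_simp; ring
  -- rewrite the original integrand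
  have hcongr : (∫ x in a..b, ((x ^ ((1:ℝ)/2) : ℝ) : ℂ) *
      e (s * (2 * Real.sqrt (m * (x + T)) / k - 2 * Real.sqrt (n * (x + U)) / k)))
      = ∫ x in a..b, ((Real.sqrt x : ℝ) : ℂ) * E x := by
    apply intervalIntegral.integral_congr
    intro x hx
    rw [Set.uIcc_of_le hab] at hx
    obtain ⟨h1, hxU, hxT⟩ := hmem x hx
    have e2 : s * (2 * Real.sqrt (m * (x + T)) / k - 2 * Real.sqrt (n * (x + U)) / k) = φ x := by
      rw [Real.sqrt_mul (by positivity : (0:ℝ) ≤ (m:ℝ)),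
        Real.sqrt_mul (by positivity : (0:ℝ) ≤ (n:ℝ))]
      simp only [hφdef]; ring
    simp only [e2, ← Real.sqrt_eq_rpow]
    rfl
  -- numeric bound on G b
  have hbU : 0 < b + U := (hmem b hbmem).2.1
  have hbT : 0 < b + T := (hmem b hbmem).2.2
  have hqb : 0 < Real.sqrt (b + U) := Real.sqrt_pos.2 hbU
  have hrb : 0 < Real.sqrt (b + T) := Real.sqrt_pos.2 hbT
  have hsqM : Real.sqrt M ≤ M := by
    rw [Real.sqrt_le_left (by linarith)]; nlinarith
  have hbr3M : Real.sqrt b * Real.sqrt (b + T) ≤ 3 * M := by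
    rw [← Real.sqrt_mul (by simp only [hb]; linarith)]
    rw [Real.sqrt_le_left (by linarith)]
    have hTM' : T ≤ M := le_trans hTM hsqM
    simp only [hb]
    nlinarith
  have hψblow : ((n:ℝ) - m) / (2 * Real.sqrt n * Real.sqrt (b + T)) ≤ ψ b := by
    have hqrb : Real.sqrt (b + U) ≤ Real.sqrt (b + T) := Real.sqrt_le_sqrt (by linarith)
    have hinvs : (Real.sqrt (b + T))⁻¹ ≤ (Real.sqrt (b + U))⁻¹ := inv_anti₀ hqb hqrb
    have h5 : (Real.sqrt n - Real.sqrt m) * (Real.sqrt (b + T))⁻¹ ≤ ψ b := by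
      simp only [hψdef]
      have := mul_le_mul_of_nonneg_left hinvs (le_of_lt hsn0)
      nlinarith
    have h6 : ((n:ℝ) - m) / (2 * Real.sqrt n) ≤ Real.sqrt n - Real.sqrt m := by
      rw [div_le_iff₀ (by positivity)]
      nlinarith [sq_nonneg (Real.sqrt n - Real.sqrt m), Real.sq_sqrt (by positivity : (0:ℝ) ≤ (n:ℝ)),
        Real.sq_sqrt (by positivity : (0:ℝ) ≤ (m:ℝ))]
    calc ((n:ℝ) - m) / (2 * Real.sqrt n * Real.sqrt (b + T))
        = ((n:ℝ) - m) / (2 * Real.sqrt n) * (Real.sqrt (b + T))⁻¹ := by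
          rw [div_mul_eq_div_div, div_eq_mul_inv]
      _ ≤ (Real.sqrt n - Real.sqrt m) * (Real.sqrt (b + T))⁻¹ :=
          mul_le_mul_of_nonneg_right h6 (by positivity)
      _ ≤ ψ b := h5
  have hGbBound : G b * ((n:ℝ) - m) ≤ 6 * Real.sqrt n * M := by
    have hψb := hψpos b hbmem
    have hL : (0:ℝ) < ((n:ℝ) - m) / (2 * Real.sqrt n * Real.sqrt (b + T)) := by positivity
    have hinv : (ψ b)⁻¹ ≤ 2 * Real.sqrt n * Real.sqrt (b + T) / ((n:ℝ) - m) := by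
      have := inv_anti₀ hL hψblow
      rwa [inv_div] at this
    have h7 : G b ≤ Real.sqrt b * (2 * Real.sqrt n * Real.sqrt (b + T) / ((n:ℝ) - m)) := by
      simp only [hGdef]
      exact mul_le_mul_of_nonneg_left hinv (Real.sqrt_nonneg b)
    have h8 : G b * ((n:ℝ) - m)
        ≤ Real.sqrt b * (2 * Real.sqrt n * Real.sqrt (b + T) / ((n:ℝ) - m)) * ((n:ℝ) - m) :=
      mul_le_mul_of_nonneg_right h7 (by linarith)
    have h9 : Real.sqrt b * (2 * Real.sqrt n * Real.sqrt (b + T) / ((n:ℝ) - m)) * ((n:ℝ) - m)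
        = 2 * Real.sqrt n * (Real.sqrt b * Real.sqrt (b + T)) := by
      field_simp
    rw [h9] at h8
    nlinarith [Real.sqrt_nonneg b, hbr3M, hsn0]
  -- conclusion
  rw [hcongr]
  calc ‖∫ x in a..b, ((Real.sqrt x : ℝ) : ℂ) * E x‖
      ≤ k / Real.pi * G b := hmain
    _ ≤ 10 * k * Real.sqrt n * M / ((n:ℝ) - m) := by
        rw [div_mul_eq_mul_div, div_le_div_iff₀ hπ (by linarith : (0:ℝ) < (n:ℝ) - m)]
        have h10 : (k:ℝ) * (G b * ((n:ℝ) - m)) ≤ (k:ℝ) * (6 * Real.sqrt n * M) :=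
          mul_le_mul_of_nonneg_left hGbBound (le_of_lt hk0)
        nlinarith [Real.pi_gt_three, mul_pos (mul_pos hk0 hsn0) (by linarith : (0:ℝ) < M)]
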